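/- Let K be a field of characteristic zero, n ∈ ℕ, k ∈ {1,…,n}, and F_{n,k} = {v_j : j ∈ [n−k]} ∪ T^n_{=3} ⊆ K[x_1,…,x_n] where v_j = Σ_{i=1}^n i^j x_i. Then K[x_1,…,x_n]/⟨F_{n,k}⟩ is isomorphic as a K-algebra to K[y_1,…,y_k]/⟨T^k_{=3}⟩, the polynomial ring in k variables modulo the ideal generated by all monomials of degree 3; in particular dim_K K[x_1,…,x_n]/⟨F_{n,k}⟩ = 1 + k + k(k+1)/2. -/

import Mathlib

open MvPolynomial

/-- Total degree of a monomial given by its exponent vector. -/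
def mdeg {n : ℕ} (m : Fin n →₀ ℕ) : ℕ := m.sum fun _ k => k

/-- The linear form `v_j = ∑_{i=1}^n i^j x_i`. -/
noncomputable def vlin (K : Type*) [Field K] (n j : ℕ) : MvPolynomial (Fin n) K :=
  ∑ i : Fin n, C ((((i : ℕ) + 1) ^ j : ℕ) : K) * X i

/-- The set `F_{n,k} = {v_j : j ∈ [n-k]} ∪ T^n_{=3}`. -/
noncomputable def Fnk (K : Type*) [Field K] (n k : ℕ) : Set (MvPolynomial (Fin n) K) :=
  (Set.range fun j : Fin (n - k) => vlin K n ((j : ℕ) + 1)) ∪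
    ((fun m => monomial m (1 : K)) '' {m : Fin n →₀ ℕ | mdeg m = 3})

set_option linter.unusedSectionVars false
set_option linter.unusedVariables false


namespace FnkAux

lemma mdeg_eq_degree {n : ℕ} (m : Fin n →₀ ℕ) : mdeg m = Finsupp.degree m := rfl

lemma mdeg_eq_sum {n : ℕ} (m : Fin n →₀ ℕ) : mdeg m = ∑ i, m i :=
  Finsupp.sum_fintype _ _ (fun _ => rfl)

lemma mdeg_mono {n : ℕ} {a b : Fin n →₀ ℕ} (h : a ≤ b) : mdeg a ≤ mdeg b := by
  rw [mdeg_eq_sum, mdeg_eq_sum]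
  exact Finset.sum_le_sum fun i _ => Finsupp.le_def.mp h i

lemma apply_le_mdeg {n : ℕ} (m : Fin n →₀ ℕ) (i : Fin n) : m i ≤ mdeg m := by
  rw [mdeg_eq_sum]
  exact Finset.single_le_sum (fun _ _ => Nat.zero_le _) (Finset.mem_univ i)

lemma mdeg_add {n : ℕ} (a b : Fin n →₀ ℕ) : mdeg (a + b) = mdeg a + mdeg b := by
  simp [mdeg_eq_sum, Finsupp.add_apply, Finset.sum_add_distrib]

lemma mdeg_single {n : ℕ} (i : Fin n) (e : ℕ) : mdeg (Finsupp.single i e) = e := by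
  rw [mdeg]; exact Finsupp.sum_single_index rfl

lemma mdeg_zero {n : ℕ} : mdeg (0 : Fin n →₀ ℕ) = 0 := by simp [mdeg]

lemma exists_le_mdeg_eq {n : ℕ} (d : ℕ) (m : Fin n →₀ ℕ) (h : d ≤ mdeg m) :
    ∃ m' : Fin n →₀ ℕ, m' ≤ m ∧ mdeg m' = d := by
  induction d with
  | zero => exact ⟨0, zero_le, mdeg_zero⟩
  | succ d ih =>
    obtain ⟨m', hle, hdeg⟩ := ih (Nat.le_of_succ_le h)
    have hex : ∃ i, m' i < m i := by
      by_contra hc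
      push_neg at hc
      have : mdeg m ≤ mdeg m' := mdeg_mono (Finsupp.le_def.mpr hc)
      omega
    obtain ⟨i, hi⟩ := hex
    refine ⟨m' + Finsupp.single i 1, ?_, by rw [mdeg_add, mdeg_single, hdeg]⟩
    rw [Finsupp.le_def]
    intro j
    rcases eq_or_ne j i with rfl | hne
    · simpa [Finsupp.single_eq_same] using hi
    · simpa [Finsupp.single_eq_of_ne' (Ne.symm hne)] using Finsupp.le_def.mp hle j


variable {K : Type*} [Field K]

/-- The ideal generated by all degree-3 monomials. -/
noncomputable def T3 (K : Type*) [Field K] (n : ℕ) : Ideal (MvPolynomial (Fin n) K) :=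
  Ideal.span ((fun m => monomial m (1 : K)) '' {m : Fin n →₀ ℕ | mdeg m = 3})

lemma mem_T3_iff {n : ℕ} {p : MvPolynomial (Fin n) K} :
    p ∈ T3 K n ↔ ∀ m ∈ p.support, 3 ≤ mdeg m := by
  rw [T3, mem_ideal_span_monomial_image]
  constructor
  · intro h m hm
    obtain ⟨m', hm', hle⟩ := h m hm
    exact hm' ▸ mdeg_mono hle
  · intro h m hm
    obtain ⟨m', h1, h2⟩ := exists_le_mdeg_eq 3 m (h m hm)
    exact ⟨m', h2, h1⟩

lemma isHomogeneous_mem_T3 {n : ℕ} {p : MvPolynomial (Fin n) K}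
    (hp : p.IsHomogeneous 3) : p ∈ T3 K n := by
  refine mem_T3_iff.2 fun m hm => ?_
  have h1 := hp (mem_support_iff.1 hm)
  rw [mdeg_eq_degree, Finsupp.degree_eq_weight_one]
  exact h1.ge

/-- The linear form with coefficient vector `c`, as a linear map. -/
noncomputable def lfL {a : ℕ} : (Fin a → K) →ₗ[K] MvPolynomial (Fin a) K where
  toFun c := ∑ i, C (c i) * X i
  map_add' x y := by simp [map_add, add_mul, Finset.sum_add_distrib]
  map_smul' r x := by
    simp [smul_eq_C_mul, Finset.mul_sum, map_mul, mul_assoc]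

lemma lfL_apply {a : ℕ} (c : Fin a → K) : lfL c = ∑ i, C (c i) * X i := rfl

lemma lfL_single {a : ℕ} (i : Fin a) : lfL (Pi.single i (1 : K)) = X i := by
  rw [lfL_apply, Finset.sum_eq_single i]
  · simp
  · intro j _ hj
    simp [Pi.single_eq_of_ne hj]
  · simp

lemma lfL_isHomogeneous {a : ℕ} (c : Fin a → K) : (lfL c).IsHomogeneous 1 := by
  rw [lfL_apply]
  exact IsHomogeneous.sum _ _ _ fun i _ => isHomogeneous_C_mul_X _ _

/-- The algebra map substituting the linear forms given by `h`. -/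
noncomputable def Hmap {a b : ℕ} (h : (Fin a → K) →ₗ[K] (Fin b → K)) :
    MvPolynomial (Fin a) K →ₐ[K] MvPolynomial (Fin b) K :=
  aeval fun i => lfL (h (Pi.single i 1))

lemma Hmap_X {a b : ℕ} (h : (Fin a → K) →ₗ[K] (Fin b → K)) (i : Fin a) :
    Hmap h (X i) = lfL (h (Pi.single i 1)) :=
  aeval_X _ _

lemma Hmap_lfL {a b : ℕ} (h : (Fin a → K) →ₗ[K] (Fin b → K)) (c : Fin a → K) :
    Hmap h (lfL c) = lfL (h c) := by
  have hc : c = ∑ i, c i • (Pi.single i (1 : K) : Fin a → K) := by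
    funext j
    simp [Finset.sum_apply, Pi.single_apply]
  rw [lfL_apply, map_sum]
  conv_rhs => rw [hc]
  rw [map_sum, map_sum]
  refine Finset.sum_congr rfl fun i _ => ?_
  rw [map_mul, Hmap_X]
  simp [smul_eq_C_mul, algebraMap_eq, map_smul]

lemma Hmap_monomial_isHomogeneous {a b : ℕ} (h : (Fin a → K) →ₗ[K] (Fin b → K))
    (m : Fin a →₀ ℕ) : (Hmap h (monomial m (1 : K))).IsHomogeneous (mdeg m) := by
  rw [monomial_eq, C_1, one_mul, Finsupp.prod, map_prod]
  have : mdeg m = ∑ i ∈ m.support, m i := rfl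
  rw [this]
  refine IsHomogeneous.prod _ _ _ fun i _ => ?_
  rw [map_pow, Hmap_X]
  simpa using (lfL_isHomogeneous (h (Pi.single i 1))).pow (m i)

lemma Hmap_mem_T3 {a b : ℕ} (h : (Fin a → K) →ₗ[K] (Fin b → K))
    {p : MvPolynomial (Fin a) K} (hp : p ∈ T3 K a) : Hmap h p ∈ T3 K b := by
  have hmap : Ideal.map (Hmap h : MvPolynomial (Fin a) K →+* MvPolynomial (Fin b) K)
      (T3 K a) ≤ T3 K b := by
    rw [T3, Ideal.map_span]
    refine Ideal.span_le.2 ?_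
    rintro _ ⟨_, ⟨m, hm, rfl⟩, rfl⟩
    exact isHomogeneous_mem_T3 (hm ▸ Hmap_monomial_isHomogeneous h m)
  exact hmap (Ideal.mem_map_of_mem _ hp)


noncomputable instance lowFintype (k : ℕ) : Fintype {m : Fin k →₀ ℕ // mdeg m ≤ 2} :=
  Fintype.ofInjective (fun m => (fun i => (⟨m.1 i, by
    have := apply_le_mdeg m.1 i
    have := m.2
    omega⟩ : Fin 3) : Fin k → Fin 3))
    (by
      intro m m' h
      ext i
      exact congrArg Fin.val (congrFun h i))

/-- The monomial basis of the quotient by `T3`. -/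
noncomputable def qbasis (k : ℕ) :
    Module.Basis {m : Fin k →₀ ℕ // mdeg m ≤ 2} K (MvPolynomial (Fin k) K ⧸ T3 K k) := by
  refine Module.Basis.mk (v := fun m => Ideal.Quotient.mkₐ K (T3 K k) (monomial m.1 1)) ?_ ?_
  · rw [Fintype.linearIndependent_iff]
    intro g hg m0
    by_contra hg0
    set p : MvPolynomial (Fin k) K := ∑ m : {m : Fin k →₀ ℕ // mdeg m ≤ 2},
      g m • monomial m.1 (1 : K) with hp
    have hpm : Ideal.Quotient.mkₐ K (T3 K k) p = 0 := by
      rw [hp, map_sum]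
      simpa using hg
    have hmem : p ∈ T3 K k := by
      rw [Ideal.Quotient.mkₐ_eq_mk] at hpm
      exact Ideal.Quotient.eq_zero_iff_mem.mp hpm
    have hcoeff : coeff m0.1 p = g m0 := by
      rw [hp, coeff_sum, Finset.sum_eq_single m0]
      · simp [coeff_smul, coeff_monomial]
      · intro m _ hne
        have hne' : m.1 ≠ m0.1 := fun h => hne (Subtype.ext h)
        simp [coeff_smul, coeff_monomial, hne']
      · simp
    have hsupp : m0.1 ∈ p.support := by
      rw [mem_support_iff, hcoeff]; exact hg0
    have := mem_T3_iff.mp hmem m0.1 hsupp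
    have := m0.2
    omega
  · rintro x -
    obtain ⟨p, rfl⟩ := Ideal.Quotient.mkₐ_surjective K (T3 K k) x
    induction p using MvPolynomial.induction_on' with
    | monomial m a =>
      by_cases hm : mdeg m ≤ 2
      · have : (Ideal.Quotient.mkₐ K (T3 K k)) (monomial m a) =
            a • Ideal.Quotient.mkₐ K (T3 K k) (monomial m 1) := by
          rw [← map_smul]
          congr 1
          rw [smul_monomial, smul_eq_mul, mul_one]
        rw [this]
        exact Submodule.smul_mem _ _ (Submodule.subset_span ⟨⟨m, hm⟩, rfl⟩)
      · have : monomial m a ∈ T3 K k := by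
          refine mem_T3_iff.2 fun m' hm' => ?_
          rw [mem_support_iff, coeff_monomial] at hm'
          by_cases he : m = m'
          · subst he; omega
          · simp [he] at hm'
        rw [show ((Ideal.Quotient.mkₐ K (T3 K k)) (monomial m a)) = 0 from
          Ideal.Quotient.eq_zero_iff_mem.mpr this]
        exact zero_mem _
    | add p q hp hq =>
      rw [map_add]
      exact add_mem hp hq

noncomputable def edeg (k d : ℕ) : {m : Fin k →₀ ℕ // mdeg m = d} ≃ Sym (Fin k) d :=
  (Equiv.subtypeEquivRight (q := fun m : Fin k →₀ ℕ => m.sum (fun _ => id) = d)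
    (fun _ => Iff.rfl)).trans (Sym.equivNatSum (Fin k) d).symm

lemma card_low (k : ℕ) [Fintype {m : Fin k →₀ ℕ // mdeg m ≤ 2}] :
    Fintype.card {m : Fin k →₀ ℕ // mdeg m ≤ 2} = 1 + k + k * (k + 1) / 2 := by
  classical
  have d1 : Disjoint (fun m : Fin k →₀ ℕ => mdeg m = 0)
      (fun m => mdeg m = 1 ∨ mdeg m = 2) :=
    Pi.disjoint_iff.mpr fun m => Prop.disjoint_iff.mpr (by omega)
  have d2 : Disjoint (fun m : Fin k →₀ ℕ => mdeg m = 1) (fun m => mdeg m = 2) :=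
    Pi.disjoint_iff.mpr fun m => Prop.disjoint_iff.mpr (by omega)
  have E : {m : Fin k →₀ ℕ // mdeg m ≤ 2} ≃
      Sym (Fin k) 0 ⊕ (Sym (Fin k) 1 ⊕ Sym (Fin k) 2) :=
    (Equiv.subtypeEquivRight (fun m => by omega)).trans
      ((subtypeOrEquiv _ _ d1).trans
        (Equiv.sumCongr (edeg k 0)
          ((subtypeOrEquiv _ _ d2).trans (Equiv.sumCongr (edeg k 1) (edeg k 2)))))
  rw [Fintype.card_congr E, Fintype.card_sum, Fintype.card_sum,
    Sym.card_sym_eq_multichoose, Sym.card_sym_eq_multichoose, Sym.card_sym_eq_multichoose,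
    Fintype.card_fin, Nat.multichoose_zero_right, Nat.multichoose_eq, Nat.multichoose_eq]
  rw [Nat.choose_two_right]
  rcases Nat.eq_zero_or_pos k with rfl | hk
  · simp
  · rw [Nat.choose_one_right]
    have h1 : k + 1 - 1 = k := by omega
    have h2 : k + 2 - 1 = k + 1 := by omega
    rw [h1, h2]
    have h3 : k + 1 - 1 = k := by omega
    rw [h3, Nat.mul_comm (k + 1) k, Nat.add_assoc]

/-- coefficient vectors of the linear forms `v_{j+1}`. -/
def wvec (n k : ℕ) (K : Type*) [Field K] : Fin (n - k) → (Fin n → K) :=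
  fun j i => ((((i : ℕ) + 1) ^ ((j : ℕ) + 1) : ℕ) : K)

open Matrix in
lemma wvec_li [CharZero K] (n k : ℕ) : LinearIndependent K (wvec n k K) := by
  set a := n - k with ha
  have han : a ≤ n := Nat.sub_le n k
  set v : Fin a → K := fun i => (((i : ℕ) + 1 : ℕ) : K) with hv
  set M : Matrix (Fin a) (Fin a) K :=
    Matrix.of (fun j i => ((((i : ℕ) + 1) ^ ((j : ℕ) + 1) : ℕ) : K)) with hM
  have hMT : Mᵀ = Matrix.diagonal v * Matrix.vandermonde v := by
    ext i j
    simp only [Matrix.transpose_apply, hM, Matrix.of_apply, Matrix.diagonal_mul,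
      Matrix.vandermonde_apply, hv]
    push_cast
    ring
  have hvne : ∀ i : Fin a, v i ≠ 0 := by
    intro i
    show (((i : ℕ) + 1 : ℕ) : K) ≠ 0
    exact Nat.cast_ne_zero.mpr (by omega)
  have hdet : M.det ≠ 0 := by
    rw [← Matrix.det_transpose, hMT, Matrix.det_mul, Matrix.det_diagonal,
      Matrix.det_vandermonde]
    refine mul_ne_zero (Finset.prod_ne_zero_iff.mpr fun i _ => hvne i)
      (Finset.prod_ne_zero_iff.mpr fun i _ => Finset.prod_ne_zero_iff.mpr fun j hj => ?_)
    have hij : (i : ℕ) < (j : ℕ) := Fin.lt_iff_val_lt_val.mp (Finset.mem_Ioi.mp hj)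
    intro hzero
    have hvij : v j = v i := sub_eq_zero.mp hzero
    simp only [hv] at hvij
    have : (j : ℕ) + 1 = (i : ℕ) + 1 := Nat.cast_injective hvij
    omega
  have hMli : LinearIndependent K (fun j => M j) :=
    Matrix.linearIndependent_rows_iff_isUnit.mpr
      ((Matrix.isUnit_iff_isUnit_det M).mpr (isUnit_iff_ne_zero.mpr hdet))
  have hcomp : (⇑(LinearMap.funLeft K K (Fin.castLE han)) ∘ wvec n k K) =
      fun j => M j := by
    funext j
    funext i
    simp [LinearMap.funLeft_apply, wvec, hM, Fin.coe_castLE]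
  exact LinearIndependent.of_comp (LinearMap.funLeft K K (Fin.castLE han))
    (by rw [hcomp]; exact hMli)

lemma exists_fg_gen (n k : ℕ) (hkn : k ≤ n) (W : Submodule K (Fin n → K))
    (hWfr : Module.finrank K W = n - k) :
    ∃ (f : (Fin n → K) →ₗ[K] (Fin k → K)) (g : (Fin k → K) →ₗ[K] (Fin n → K)),
      f.comp g = LinearMap.id ∧
      (∀ x ∈ W, f x = 0) ∧
      (∀ x : Fin n → K, x - g (f x) ∈ W) := by
  classical
  have hfr : Module.finrank K ((Fin n → K) ⧸ W) = k := by
    have h1 := Submodule.finrank_quotient_add_finrank W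
    have h3 : Module.finrank K (Fin n → K) = n := Module.finrank_fin_fun K
    omega
  have e : ((Fin n → K) ⧸ W) ≃ₗ[K] (Fin k → K) :=
    LinearEquiv.ofFinrankEq _ _ (by rw [hfr, Module.finrank_fin_fun])
  set f : (Fin n → K) →ₗ[K] (Fin k → K) := e.toLinearMap ∘ₗ W.mkQ with hf
  have hfsurj : Function.Surjective f := e.surjective.comp (Submodule.mkQ_surjective W)
  obtain ⟨g, hg⟩ := f.exists_rightInverse_of_surjective (LinearMap.range_eq_top.mpr hfsurj)
  have hker : ∀ x, f x = 0 → x ∈ W := by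
    intro x hx
    have h0 : e (W.mkQ x) = 0 := hx
    rw [LinearEquiv.map_eq_zero_iff] at h0
    rwa [Submodule.mkQ_apply, Submodule.Quotient.mk_eq_zero W] at h0
  refine ⟨f, g, hg, ?_, ?_⟩
  · intro x hxW
    simp only [hf, LinearMap.comp_apply, Submodule.mkQ_apply]
    rw [(Submodule.Quotient.mk_eq_zero W).mpr hxW, map_zero]
  · intro x
    apply hker
    rw [map_sub]
    have : f (g (f x)) = f x := by
      have := congrArg (fun h => h (f x)) (congrArg DFunLike.coe hg)
      simpa using this
    rw [this, sub_self]

lemma exists_fg [CharZero K] (n k : ℕ) (hkn : k ≤ n) :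
    ∃ (f : (Fin n → K) →ₗ[K] (Fin k → K)) (g : (Fin k → K) →ₗ[K] (Fin n → K)),
      f.comp g = LinearMap.id ∧
      (∀ j : Fin (n - k), f (wvec n k K j) = 0) ∧
      (∀ x : Fin n → K, x - g (f x) ∈ Submodule.span K (Set.range (wvec n k K))) := by
  have hli := wvec_li (K := K) n k
  have hfr : Module.finrank K (Submodule.span K (Set.range (wvec n k K))) = n - k := by
    rw [finrank_span_eq_card hli, Fintype.card_fin]
  obtain ⟨f, g, h1, h2, h3⟩ := exists_fg_gen n k hkn _ hfr
  exact ⟨f, g, h1,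
    fun j => h2 _ (Submodule.subset_span (Set.mem_range_self j)), h3⟩

lemma vlin_eq_lfL (n k : ℕ) (j : Fin (n - k)) :
    vlin K n ((j : ℕ) + 1) = lfL (wvec n k K j) := by
  rw [lfL_apply]
  rfl

/-- The main equivalence. -/
lemma mainEquiv [CharZero K] (n k : ℕ) (hkn : k ≤ n) :
    Nonempty ((MvPolynomial (Fin n) K ⧸ Ideal.span (Fnk K n k)) ≃ₐ[K]
      (MvPolynomial (Fin k) K ⧸ T3 K k)) := by
  classical
  obtain ⟨f, g, hfg, hfw, hgf⟩ := exists_fg (K := K) n k hkn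
  set S : Ideal (MvPolynomial (Fin n) K) := Ideal.span (Fnk K n k) with hS
  have hT3S : T3 K n ≤ S := Ideal.span_mono Set.subset_union_right
  have hvS : ∀ j : Fin (n - k), vlin K n ((j : ℕ) + 1) ∈ S :=
    fun j => Ideal.subset_span (Or.inl ⟨j, rfl⟩)
  -- the forward map kills the generators of S
  have hgen : ∀ a ∈ S, ((Ideal.Quotient.mkₐ K (T3 K k)).comp (Hmap f)) a = 0 := by
    intro a ha
    have hsub : Fnk K n k ⊆
        ↑(RingHom.ker ((Ideal.Quotient.mkₐ K (T3 K k)).comp (Hmap f))) := by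
      rintro p (⟨j, rfl⟩ | ⟨m, hm, rfl⟩)
      · simp only [SetLike.mem_coe, RingHom.mem_ker, AlgHom.comp_apply]
        rw [vlin_eq_lfL n k j, Hmap_lfL, hfw j, map_zero, map_zero]
      · simp only [SetLike.mem_coe, RingHom.mem_ker, AlgHom.comp_apply]
        rw [Ideal.Quotient.mkₐ_eq_mk, Ideal.Quotient.eq_zero_iff_mem]
        exact isHomogeneous_mem_T3 (hm ▸ Hmap_monomial_isHomogeneous f m)
    exact (Ideal.span_le.mpr hsub) ha
  -- the backward map kills the generators of T3
  have hgen' : ∀ a ∈ T3 K k, ((Ideal.Quotient.mkₐ K S).comp (Hmap g)) a = 0 := by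
    intro a ha
    have : Hmap g a ∈ S := hT3S (Hmap_mem_T3 g ha)
    simp only [AlgHom.comp_apply, Ideal.Quotient.mkₐ_eq_mk]
    exact Ideal.Quotient.eq_zero_iff_mem.mpr this
  set Ψ := Ideal.Quotient.liftₐ S ((Ideal.Quotient.mkₐ K (T3 K k)).comp (Hmap f)) hgen with hΨ
  set Θ := Ideal.Quotient.liftₐ (T3 K k) ((Ideal.Quotient.mkₐ K S).comp (Hmap g)) hgen' with hΘ
  have hΨmk : ∀ p, Ψ (Ideal.Quotient.mkₐ K S p) =
      Ideal.Quotient.mkₐ K (T3 K k) (Hmap f p) := by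
    intro p
    exact DFunLike.congr_fun (Ideal.Quotient.liftₐ_comp S _ hgen) p
  have hΘmk : ∀ p, Θ (Ideal.Quotient.mkₐ K (T3 K k) p) =
      Ideal.Quotient.mkₐ K S (Hmap g p) := by
    intro p
    exact DFunLike.congr_fun (Ideal.Quotient.liftₐ_comp (T3 K k) _ hgen') p
  -- lfL maps the span of the wvec's into S
  have hWS : ∀ x ∈ Submodule.span K (Set.range (wvec n k K)), lfL x ∈ S := by
    intro x hx
    induction hx using Submodule.span_induction with
    | mem x hx =>
      obtain ⟨j, rfl⟩ := hx
      rw [← vlin_eq_lfL n k j]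
      exact hvS j
    | zero => simpa using S.zero_mem
    | add x y _ _ hx hy => rw [map_add]; exact S.add_mem hx hy
    | smul c x _ hx => rw [map_smul, smul_eq_C_mul]; exact S.mul_mem_left _ hx
  refine ⟨AlgEquiv.ofAlgHom Ψ Θ ?_ ?_⟩
  · apply Ideal.Quotient.algHom_ext
    apply MvPolynomial.algHom_ext
    intro i
    simp only [AlgHom.comp_apply, AlgHom.id_apply]
    rw [hΘmk, hΨmk, Hmap_X, Hmap_lfL]
    have hfg1 : f (g (Pi.single i 1)) = Pi.single i 1 := by
      have h := LinearMap.congr_fun hfg (Pi.single i 1)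
      simpa using h
    rw [hfg1, lfL_single]
  · apply Ideal.Quotient.algHom_ext
    apply MvPolynomial.algHom_ext
    intro i
    simp only [AlgHom.comp_apply, AlgHom.id_apply]
    rw [hΨmk, hΘmk, Hmap_X, Hmap_lfL]
    rw [Ideal.Quotient.mkₐ_eq_mk, Ideal.Quotient.mk_eq_mk_iff_sub_mem]
    have hmem : Pi.single i 1 - g (f (Pi.single i 1)) ∈
        Submodule.span K (Set.range (wvec n k K)) := hgf (Pi.single i 1)
    have h2 := hWS _ hmem
    rw [map_sub, lfL_single] at h2
    have h3 := S.neg_mem h2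
    rwa [neg_sub] at h3

end FnkAux

theorem Fnk_quotient_iso {K : Type*} [Field K] [CharZero K] (n k : ℕ)
    (hk1 : 1 ≤ k) (hkn : k ≤ n) :
    Nonempty ((MvPolynomial (Fin n) K ⧸ Ideal.span (Fnk K n k)) ≃ₐ[K]
      (MvPolynomial (Fin k) K ⧸
        Ideal.span ((fun m => monomial m (1 : K)) '' {m : Fin k →₀ ℕ | mdeg m = 3}))) ∧
    Module.finrank K (MvPolynomial (Fin n) K ⧸ Ideal.span (Fnk K n k)) =
      1 + k + k * (k + 1) / 2 := by
  obtain ⟨E⟩ := FnkAux.mainEquiv (K := K) n k hkn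
  constructor
  · exact ⟨E⟩
  · rw [E.toLinearEquiv.finrank_eq]
    rw [Module.finrank_eq_card_basis (FnkAux.qbasis k)]
    exact FnkAux.card_low k
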